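/- Let X be a metric space with its Borel σ-algebra and let γ be a finite Borel measure on X. Let L ≥ 1 and, for each ℓ ∈ {1,…,L}, let I_ℓ be a finite index set and {A_{ℓ,i}}_{i∈I_ℓ} a measurable partition of X (the sets are pairwise disjoint and their union is X). For each R ∈ ℕ, each ℓ, and each i ∈ I_ℓ, let μ^R_{ℓ,i} be a finite Borel measure on X, and let k^R_ℓ ≥ 0 be combination weights with Σ_{ℓ=1}^L k^R_ℓ > 0 for every R. Suppose there is a nonempty subset L₀ ⊆ {1,…,L} such that: (a) for each ℓ ∈ L₀ and i ∈ I_ℓ, μ^R_{ℓ,i} converges weakly to γ|_{A_{ℓ,i}} as R → ∞; (b) for each ℓ ∈ L₀, k^R_ℓ → ∞ as R → ∞; (c) for each ℓ ∉ L₀, sup_R k^R_ℓ < ∞ and sup_{R, i∈I_ℓ} μ^R_{ℓ,i}(X) < ∞. Then the combined measure μ̂^R := (Σ_{ℓ=1}^L k^R_ℓ)⁻¹ · Σ_{ℓ=1}^L k^R_ℓ · Σ_{i∈I_ℓ} μ^R_{ℓ,i} converges weakly to γ as R → ∞. -/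

import Mathlib

open MeasureTheory Filter Topology
open scoped NNReal ENNReal BoundedContinuousFunction

/-- Weak convergence of a sequence of (finite Borel) measures: convergence of integrals of
all bounded continuous real-valued functions. -/
def WeakConv {X : Type*} [MeasurableSpace X] [TopologicalSpace X]
    (μ : ℕ → Measure X) (ν : Measure X) : Prop :=
  ∀ f : X →ᵇ ℝ,
    Tendsto (fun n => ∫ x, f x ∂(μ n)) atTop (𝓝 (∫ x, f x ∂ν))

theorem combined_estimator_weak_convergence
    {X : Type*} [MetricSpace X] [MeasurableSpace X] [BorelSpace X]
    (γ : Measure X) [IsFiniteMeasure γ]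
    (L : ℕ) (hL : 1 ≤ L)
    (ι : Fin L → Type*) [∀ ℓ, Fintype (ι ℓ)]
    (A : ∀ ℓ : Fin L, ι ℓ → Set X)
    (hAmeas : ∀ ℓ i, MeasurableSet (A ℓ i))
    (hAdisj : ∀ ℓ, Pairwise fun i j => Disjoint (A ℓ i) (A ℓ j))
    (hAcover : ∀ ℓ, (⋃ i, A ℓ i) = Set.univ)
    (μ : ℕ → ∀ ℓ : Fin L, ι ℓ → Measure X)
    (hμfin : ∀ R ℓ i, IsFiniteMeasure (μ R ℓ i))
    (k : ℕ → Fin L → ℝ≥0)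
    (hkpos : ∀ R, 0 < ∑ ℓ, k R ℓ)
    (L₀ : Set (Fin L)) (hL₀ : L₀.Nonempty)
    (ha : ∀ ℓ ∈ L₀, ∀ i, WeakConv (fun R => μ R ℓ i) (γ.restrict (A ℓ i)))
    (hb : ∀ ℓ ∈ L₀, Tendsto (fun R => k R ℓ) atTop atTop)
    (hc₁ : ∀ ℓ ∉ L₀, ∃ C : ℝ≥0, ∀ R, k R ℓ ≤ C)
    (hc₂ : ∀ ℓ ∉ L₀, ∃ C : ℝ≥0, ∀ R (i : ι ℓ), μ R ℓ i Set.univ ≤ (C : ℝ≥0∞)) :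
    WeakConv (fun R => (∑ ℓ, k R ℓ)⁻¹ • ∑ ℓ, k R ℓ • ∑ i, μ R ℓ i) γ := by
  intro f
  set I : ℝ := ∫ x, f x ∂γ with hI
  have hint : ∀ R ℓ (i : ι ℓ), Integrable f (μ R ℓ i) := fun R ℓ i => by
    haveI := hμfin R ℓ i
    exact f.integrable _
  set s : ℕ → ℝ := fun R => ((∑ ℓ, k R ℓ : ℝ≥0) : ℝ) with hs
  have hspos : ∀ R, 0 < s R := fun R => by exact_mod_cast hkpos R
  set a : ℕ → Fin L → ℝ := fun R ℓ => ∑ i, ∫ x, f x ∂(μ R ℓ i) with ha'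
  set w : ℕ → Fin L → ℝ := fun R ℓ => (k R ℓ : ℝ) / s R with hw
  -- the integral against the combined measure
  have key : ∀ R, ∫ x, f x ∂((∑ ℓ, k R ℓ)⁻¹ • ∑ ℓ, k R ℓ • ∑ i, μ R ℓ i)
      = ∑ ℓ, w R ℓ * a R ℓ := by
    intro R
    rw [integral_smul_nnreal_measure]
    have h1 : ∫ x, f x ∂(∑ ℓ, k R ℓ • ∑ i, μ R ℓ i)
        = ∑ ℓ, (k R ℓ : ℝ) * a R ℓ := by
      rw [integral_finset_sum_measure]
      · refine Finset.sum_congr rfl fun ℓ _ => ?_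
        rw [integral_smul_nnreal_measure, integral_finset_sum_measure
          (fun i _ => hint R ℓ i)]
        simp [ha', NNReal.smul_def]
      · intro ℓ _
        refine Integrable.smul_measure ?_ (by simp)
        exact integrable_finset_sum_measure.2 fun i _ => hint R ℓ i
    rw [h1, NNReal.smul_def, Finset.smul_sum]
    refine Finset.sum_congr rfl fun ℓ _ => ?_
    simp only [hw, smul_eq_mul, NNReal.coe_inv, hs]
    ring
  -- weights sum to 1
  have hsum1 : ∀ R, ∑ ℓ, w R ℓ = 1 := by
    intro R
    simp only [hw, ← Finset.sum_div]
    rw [div_eq_one_iff_eq (hspos R).ne']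
    simp [hs]
  -- partition: sum of restricted integrals is I
  have hpart : ∀ ℓ, ∑ i, ∫ x, f x ∂(γ.restrict (A ℓ i)) = I := by
    intro ℓ
    have h := integral_iUnion (μ := γ) (hAmeas ℓ) (hAdisj ℓ)
      ((f.integrable γ).integrableOn)
    rw [hAcover ℓ, Measure.restrict_univ, tsum_fintype] at h
    exact h.symm
  -- s tends to infinity
  obtain ⟨ℓ₀, hℓ₀⟩ := hL₀
  have hsinf : Tendsto s atTop atTop := by
    refine tendsto_atTop_mono (fun R => ?_) (NNReal.tendsto_coe_atTop.2 (hb ℓ₀ hℓ₀))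
    exact_mod_cast Finset.single_le_sum (f := k R) (fun ℓ _ => zero_le)
      (Finset.mem_univ ℓ₀)
  -- each summand of ∑ w (a - I) tends to 0
  have hterm : ∀ ℓ, Tendsto (fun R => w R ℓ * (a R ℓ - I)) atTop (𝓝 0) := by
    intro ℓ
    have hwnn : ∀ R, 0 ≤ w R ℓ := fun R => div_nonneg (k R ℓ).coe_nonneg (hspos R).le
    by_cases hℓ : ℓ ∈ L₀
    · have haℓ : Tendsto (fun R => a R ℓ) atTop (𝓝 I) := by
        rw [← hpart ℓ]
        exact tendsto_finset_sum _ fun i _ => ha ℓ hℓ i f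
      have h0 : Tendsto (fun R => ‖a R ℓ - I‖) atTop (𝓝 0) := by
        have h0' := (haℓ.sub (tendsto_const_nhds (x := I))).norm
        simpa using h0'
      refine squeeze_zero_norm (fun R => ?_) h0
      rw [norm_mul]
      refine mul_le_of_le_one_left (norm_nonneg _) ?_
      rw [Real.norm_of_nonneg (hwnn R)]
      refine div_le_one_of_le₀ ?_ (hspos R).le
      exact_mod_cast Finset.single_le_sum (f := k R) (fun ℓ' _ => zero_le)
        (Finset.mem_univ ℓ)
    · obtain ⟨C₁, hC₁⟩ := hc₁ ℓ hℓ
      obtain ⟨C₂, hC₂⟩ := hc₂ ℓ hℓ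
      have habd : ∀ R, ‖a R ℓ‖ ≤ (Fintype.card (ι ℓ) : ℝ) * (‖f‖ * C₂) := by
        intro R
        calc ‖a R ℓ‖ ≤ ∑ i, ‖∫ x, f x ∂(μ R ℓ i)‖ := norm_sum_le _ _
          _ ≤ ∑ _i : ι ℓ, ‖f‖ * (C₂ : ℝ) := by
              refine Finset.sum_le_sum fun i _ => ?_
              haveI := hμfin R ℓ i
              refine le_trans (norm_integral_le_of_norm_le_const
                (C := ‖f‖) (Filter.Eventually.of_forall fun x => f.norm_coe_le_norm x)) ?_
              refine mul_le_mul_of_nonneg_left ?_ (norm_nonneg f)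
              have h2 := ENNReal.toReal_mono (by simp) (hC₂ R i)
              simpa [Measure.real] using h2
          _ = (Fintype.card (ι ℓ) : ℝ) * (‖f‖ * C₂) := by
              simp [Finset.sum_const, nsmul_eq_mul]
      set M : ℝ := (Fintype.card (ι ℓ) : ℝ) * (‖f‖ * C₂) + ‖I‖ with hM
      have hMnn : 0 ≤ M := by
        have : (0:ℝ) ≤ (Fintype.card (ι ℓ) : ℝ) * (‖f‖ * C₂) :=
          le_trans (norm_nonneg _) (habd 0)
        positivity
      have hwto : Tendsto (fun R => (C₁ : ℝ) / s R * M) atTop (𝓝 0) := by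
        simpa using (Tendsto.div_atTop (tendsto_const_nhds (x := (C₁ : ℝ))) hsinf).mul_const M
      refine squeeze_zero_norm (fun R => ?_) hwto
      rw [norm_mul]
      have h1 : ‖w R ℓ‖ ≤ (C₁ : ℝ) / s R := by
        rw [Real.norm_of_nonneg (hwnn R)]
        exact div_le_div_of_nonneg_right (by exact_mod_cast hC₁ R) (hspos R).le
      have h2 : ‖a R ℓ - I‖ ≤ M := le_trans (norm_sub_le _ _)
        (add_le_add (habd R) le_rfl)
      exact mul_le_mul h1 h2 (norm_nonneg _) (div_nonneg C₁.coe_nonneg (hspos R).le)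
  -- conclude
  have hsum0 : Tendsto (fun R => ∑ ℓ, w R ℓ * (a R ℓ - I)) atTop (𝓝 0) := by
    have := tendsto_finset_sum (Finset.univ : Finset (Fin L))
      (fun ℓ _ => hterm ℓ)
    simpa using this
  have hfin : Tendsto (fun R => (∑ ℓ, w R ℓ * (a R ℓ - I)) + I) atTop (𝓝 (0 + I)) :=
    hsum0.add tendsto_const_nhds
  rw [zero_add] at hfin
  refine Tendsto.congr (fun R => ?_) hfin
  rw [key R]
  have : ∑ ℓ, w R ℓ * (a R ℓ - I) = (∑ ℓ, w R ℓ * a R ℓ) - (∑ ℓ, w R ℓ) * I := by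
    rw [Finset.sum_mul, ← Finset.sum_sub_distrib]
    exact Finset.sum_congr rfl fun ℓ _ => by ring
  rw [this, hsum1 R]
  ring
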